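/- Let {ẑ_β} and {z_β} be defined by z_β = (1/2)√(b̂_β² - 1) and ẑ_β = (1/2)√((b̂_β - d_β)² - 1), where b̂_β > 1 + d_β and d_β ≥ 0. If ∑_β d_β/(b̂_β - d_β - 1) < ∞ and sup_β b̂_β < ∞, then the infinite product ∏_β (z_β/ẑ_β) converges to a finite value bounded by exp(c·sup_γ b̂_γ·∑_β d_β/(b̂_β - d_β - 1)) for a numerical constant c. -/

import Mathlib

open scoped BigOperators

/-- With `z_β = (1/2)√(b̂_β²-1)` and `ẑ_β = (1/2)√((b̂_β-d_β)²-1)`, where `d_β ≥ 0`,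
`b̂_β > 1 + d_β`, `∑_β d_β/(b̂_β-d_β-1) < ∞` and `sup_β b̂_β < ∞`, the infinite product
`∏_β z_β/ẑ_β` converges and is bounded by
`exp(c·(sup_γ b̂_γ)·∑_β d_β/(b̂_β-d_β-1))` for a numerical constant `c`. -/
theorem stmt_11 :
    ∃ c : ℝ, 0 < c ∧ ∀ (bhat d : ℕ → ℝ),
      (∀ n, 0 ≤ d n) → (∀ n, 1 + d n < bhat n) →
      Summable (fun n => d n / (bhat n - d n - 1)) →
      BddAbove (Set.range bhat) →
      Multipliable (fun n =>
        ((1 / 2) * Real.sqrt ((bhat n) ^ 2 - 1)) /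
          ((1 / 2) * Real.sqrt ((bhat n - d n) ^ 2 - 1))) ∧
      (∏' n, ((1 / 2) * Real.sqrt ((bhat n) ^ 2 - 1)) /
          ((1 / 2) * Real.sqrt ((bhat n - d n) ^ 2 - 1)))
        ≤ Real.exp (c * (⨆ n, bhat n) * ∑' n, d n / (bhat n - d n - 1)) := by
  refine ⟨1, one_pos, fun bhat d hd hb hsum hbdd => ?_⟩
  set S : ℝ := ⨆ n, bhat n with hS
  set f : ℕ → ℝ := fun n =>
    ((1 / 2) * Real.sqrt ((bhat n) ^ 2 - 1)) /
      ((1 / 2) * Real.sqrt ((bhat n - d n) ^ 2 - 1)) with hf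
  set t : ℕ → ℝ := fun n => d n / (bhat n - d n - 1) with ht
  have hSle : ∀ n, bhat n ≤ S := fun n => le_ciSup hbdd n
  have hS1 : (1:ℝ) < S := lt_of_lt_of_le (by have := hb 0; have := hd 0; linarith) (hSle 0)
  have hBpos : ∀ n, 0 < (bhat n - d n) ^ 2 - 1 := by
    intro n; have h1 := hb n; have h2 := hd n; nlinarith
  have hApos : ∀ n, 0 < (bhat n) ^ 2 - 1 := by
    intro n; have h1 := hb n; have h2 := hd n; nlinarith
  have htnn : ∀ n, 0 ≤ t n := fun n =>
    div_nonneg (hd n) (by have := hb n; linarith)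
  have hfpos : ∀ n, 0 < f n := fun n =>
    div_pos (mul_pos (by norm_num) (Real.sqrt_pos.2 (hApos n)))
      (mul_pos (by norm_num) (Real.sqrt_pos.2 (hBpos n)))
  have hfeq : ∀ n, f n = Real.sqrt (((bhat n) ^ 2 - 1) / ((bhat n - d n) ^ 2 - 1)) := by
    intro n
    rw [hf, Real.sqrt_div (le_of_lt (hApos n))]
    exact mul_div_mul_left _ _ (by norm_num : (1:ℝ)/2 ≠ 0)
  have hratio : ∀ n, ((bhat n) ^ 2 - 1) / ((bhat n - d n) ^ 2 - 1) ≤ 1 + S * t n := by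
    intro n
    rw [div_le_iff₀ (hBpos n)]
    have h1 := hb n; have h2 := hd n; have h3 := hSle n
    have hdenpos : 0 < bhat n - d n - 1 := by linarith
    have ht' : t n * (bhat n - d n - 1) = d n := div_mul_cancel₀ _ (ne_of_gt hdenpos)
    have hkey : S * t n * ((bhat n - d n) ^ 2 - 1) = d n * (S * (bhat n - d n + 1)) := by
      linear_combination (S * (bhat n - d n + 1)) * ht'
    have e1 : d n * (2 * bhat n - d n) ≤ d n * (2 * S) :=
      mul_le_mul_of_nonneg_left (by linarith) h2
    have e2 : d n * (2 * S) ≤ d n * (S * (bhat n - d n + 1)) := by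
      refine mul_le_mul_of_nonneg_left ?_ h2
      nlinarith [mul_pos (show (0:ℝ) < S by linarith) hdenpos]
    nlinarith [e1, e2, hkey]
  have hfle : ∀ n, f n ≤ Real.exp (S * t n) := by
    intro n
    rw [hfeq n]
    calc Real.sqrt (((bhat n) ^ 2 - 1) / ((bhat n - d n) ^ 2 - 1))
        ≤ Real.sqrt (Real.exp (S * t n)) := by
          apply Real.sqrt_le_sqrt
          refine (hratio n).trans ?_
          have := Real.add_one_le_exp (S * t n); linarith
      _ ≤ Real.exp (S * t n) := by
          rw [← Real.exp_half]
          exact Real.exp_le_exp.2 (by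
            have : 0 ≤ S * t n := mul_nonneg (by linarith) (htnn n)
            linarith)
  have hf1 : ∀ n, 1 ≤ f n := by
    intro n
    rw [hfeq n, Real.one_le_sqrt, le_div_iff₀ (hBpos n)]
    have h1 := hb n; have h2 := hd n; nlinarith
  have hlognn : ∀ n, 0 ≤ Real.log (f n) := fun n => Real.log_nonneg (hf1 n)
  have hlogle : ∀ n, Real.log (f n) ≤ S * t n := by
    intro n
    rw [← Real.log_exp (S * t n)]
    exact Real.log_le_log (hfpos n) (hfle n)
  have hsumlog : Summable (fun n => Real.log (f n)) :=
    Summable.of_nonneg_of_le hlognn hlogle (hsum.mul_left S)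
  have hmult : Multipliable f :=
    Real.multipliable_of_summable_log hfpos hsumlog
  refine ⟨hmult, ?_⟩
  have hprod : (∏' n, f n) = Real.exp (∑' n, Real.log (f n)) := by
    have := Real.rexp_tsum_eq_tprod hfpos hsumlog
    exact this.symm
  rw [hprod]
  apply Real.exp_le_exp.2
  rw [one_mul, ← tsum_mul_left]
  exact Summable.tsum_le_tsum hlogle hsumlog (hsum.mul_left S)
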